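/- Let (X,d) be a compact metric space, h : X → X a homeomorphism, and Λ ⊆ X an invariant subset. For ε > 0 let pW^s_ε(Λ) be the set of points z such that there exists an ε-pseudo-orbit (z_0,…,z_n) with z_0 = z and z_n ∈ Λ. Then h⁻¹(closure(pW^s_ε(Λ))) ⊆ interior(pW^s_ε(Λ)), i.e. pW^s_ε(Λ) is a trapping region for h⁻¹. -/
import Mathlib


open Set

/-- `pWsE h Λ ε`: the set of starting points of `ε`-pseudo-orbits of `h` ending in `Λ`. -/
def pWsE {X : Type*} [MetricSpace X] (h : X → X) (Λ : Set X) (ε : ℝ) : Set X :=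
  {z | ∃ n : ℕ, ∃ w : ℕ → X, w 0 = z ∧ w n ∈ Λ ∧ ∀ k < n, dist (h (w k)) (w (k + 1)) < ε}

/-- For a homeomorphism `h` of a compact metric space and an invariant set `Λ`,
the set `pWsE h Λ ε` is a trapping region for `h⁻¹`:
`h⁻¹ (closure (pWsE h Λ ε)) ⊆ interior (pWsE h Λ ε)`. -/
theorem stmt2 {X : Type*} [MetricSpace X] [CompactSpace X] (h : X ≃ₜ X) (Λ : Set X)
    (hΛ : ⇑h '' Λ = Λ) (ε : ℝ) (hε : 0 < ε) :
    ⇑h.symm '' closure (pWsE (⇑h) Λ ε) ⊆ interior (pWsE (⇑h) Λ ε) := by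
  rintro x ⟨z, hz, rfl⟩
  have hc : ContinuousAt (⇑h) (h.symm z) := h.continuous.continuousAt
  rw [Metric.continuousAt_iff] at hc
  obtain ⟨δ, hδ, hδ'⟩ := hc (ε / 2) (by linarith)
  obtain ⟨y, hyW, hyd⟩ := Metric.mem_closure_iff.mp hz (ε / 2) (by linarith)
  obtain ⟨n, w, hw0, hwn, hwk⟩ := hyW
  apply mem_interior.mpr
  refine ⟨Metric.ball (h.symm z) δ, ?_, Metric.isOpen_ball, Metric.mem_ball_self hδ⟩
  intro x' hx'
  refine ⟨n + 1, fun k => if k = 0 then x' else w (k - 1), by simp, by simp [hwn], ?_⟩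
  intro k hk
  cases k with
  | zero =>
    simp only [if_pos rfl, Nat.add_sub_cancel, if_neg one_ne_zero, hw0]
    have h1 : dist (h x') (h (h.symm z)) < ε / 2 := hδ' (Metric.mem_ball.mp hx')
    rw [h.apply_symm_apply] at h1
    calc dist (h x') y ≤ dist (h x') z + dist z y := dist_triangle _ _ _
      _ < ε := by linarith
  | succ m =>
    simp only [Nat.succ_ne_zero, if_neg, Nat.add_sub_cancel]
    exact hwk m (by omega)
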